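/- Let 𝓜 be a compact set of real symmetric m×m matrices. Suppose that for every M ∈ 𝓜, writing M = M₊ − M₋ with M₊, M₋ positive semidefinite and ⟨M₊, M₋⟩ = 0 (the Moreau decomposition of M with respect to the positive semidefinite cone), there exists M' ∈ 𝓜 such that M' − M₊ is positive semidefinite. Then Ω_𝓜(X) = sup_{M ∈ 𝓜} trace(X M Xᵀ) is convex in X ∈ ℝ^{n×m}. -/

import Mathlib

open Matrix

private lemma psd_trace_nonneg {k : ℕ} {A : Matrix (Fin k) (Fin k) ℝ}
    (hA : A.PosSemidef) : 0 ≤ A.trace := by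
  rw [Matrix.trace]
  apply Finset.sum_nonneg
  intro i _
  have := hA.dotProduct_mulVec_nonneg (Pi.single i 1)
  simpa [Matrix.mulVec, dotProduct, Pi.single_apply, Matrix.diag] using this

private lemma quad_trace_nonneg {n m : ℕ} {M : Matrix (Fin m) (Fin m) ℝ}
    (hM : M.PosSemidef) (X : Matrix (Fin n) (Fin m) ℝ) :
    0 ≤ (X * M * Xᵀ).trace := by
  have h1 : ((Xᵀ)ᴴ * M * Xᵀ).PosSemidef := hM.conjTranspose_mul_mul_same Xᵀ
  have h2 : (Xᵀ)ᴴ = X := by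
    rw [Matrix.conjTranspose_eq_transpose_of_trivial, Matrix.transpose_transpose]
  rw [h2] at h1
  exact psd_trace_nonneg h1

/-- Moreau decomposition of a real symmetric matrix via the spectral theorem. -/
private lemma moreau {m : ℕ} {M : Matrix (Fin m) (Fin m) ℝ} (hM : M.IsSymm) :
    ∃ Mp Mm : Matrix (Fin m) (Fin m) ℝ, Mp.PosSemidef ∧ Mm.PosSemidef ∧
      M = Mp - Mm ∧ (Mpᵀ * Mm).trace = 0 := by
  have hH : M.IsHermitian := by
    rwa [Matrix.IsHermitian, Matrix.conjTranspose_eq_transpose_of_trivial]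
  set U : Matrix (Fin m) (Fin m) ℝ := (hH.eigenvectorUnitary : Matrix (Fin m) (Fin m) ℝ)
  have hUU : star U * U = 1 := Matrix.mem_unitaryGroup_iff'.mp hH.eigenvectorUnitary.2
  refine ⟨U * Matrix.diagonal (fun i => max (hH.eigenvalues i) 0) * star U,
          U * Matrix.diagonal (fun i => max (-(hH.eigenvalues i)) 0) * star U, ?_, ?_, ?_, ?_⟩
  · exact (Matrix.posSemidef_diagonal_iff.mpr fun i => le_max_right _ _).mul_mul_conjTranspose_same U
  · exact (Matrix.posSemidef_diagonal_iff.mpr fun i => le_max_right _ _).mul_mul_conjTranspose_same U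
  · have hrhs : U * Matrix.diagonal (fun i => max (hH.eigenvalues i) 0) * star U -
        U * Matrix.diagonal (fun i => max (-(hH.eigenvalues i)) 0) * star U =
        U * Matrix.diagonal (RCLike.ofReal ∘ hH.eigenvalues) * star U := by
      rw [← Matrix.sub_mul, ← Matrix.mul_sub, Matrix.diagonal_sub]
      have hfun : (fun i => max (hH.eigenvalues i) 0 - max (-(hH.eigenvalues i)) 0)
          = RCLike.ofReal ∘ hH.eigenvalues := by
        funext i
        simp only [Function.comp_apply, RCLike.ofReal_real_eq_id, id_eq]
        rcases le_total (hH.eigenvalues i) 0 with hl | hl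
        · rw [max_eq_right hl, max_eq_left (by linarith)]; ring
        · rw [max_eq_left hl, max_eq_right (by linarith)]; ring
      rw [hfun]
    rw [hrhs]
    exact hH.spectral_theorem
  · set Dp := Matrix.diagonal (fun i => max (hH.eigenvalues i) 0) with hDp
    set Dm := Matrix.diagonal (fun i => max (-(hH.eigenvalues i)) 0) with hDm
    have hDD : Dp * Dm = 0 := by
      rw [hDp, hDm, Matrix.diagonal_mul_diagonal]
      have : (fun i => max (hH.eigenvalues i) 0 * max (-(hH.eigenvalues i)) 0)
          = fun _ => (0 : ℝ) := by
        funext i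
        rcases le_total (hH.eigenvalues i) 0 with hl | hl
        · rw [max_eq_right hl, zero_mul]
        · rw [max_eq_right (by linarith : -(hH.eigenvalues i) ≤ 0), mul_zero]
      rw [this, Matrix.diagonal_zero]
    have hsymp : (U * Dp * star U)ᵀ = U * Dp * star U := by
      have := ((Matrix.posSemidef_diagonal_iff.mpr
        (fun i => le_max_right (hH.eigenvalues i) 0)).mul_mul_conjTranspose_same U).1
      rwa [Matrix.IsHermitian, Matrix.conjTranspose_eq_transpose_of_trivial] at this
    rw [hsymp]
    have hzero : (U * Dp * star U) * (U * Dm * star U) = 0 := by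
      have h2 : Dp * (star U * U) * Dm = Dp * Dm := by rw [hUU, mul_one]
      calc (U * Dp * star U) * (U * Dm * star U)
          = U * (Dp * (star U * U) * Dm) * star U := by noncomm_ring
        _ = U * (Dp * Dm) * star U := by rw [h2]
        _ = 0 := by rw [hDD, mul_zero, zero_mul]
    rw [hzero, Matrix.trace_zero]

/-- If for every `M ∈ 𝓜` with Moreau decomposition `M = M₊ - M₋` there is `M' ∈ 𝓜`
with `M' - M₊` positive semidefinite, then the VGF of `𝓜` is convex. -/
theorem vgf_convex_of_proj_dominated {n m : ℕ}
    (𝓜 : Set (Matrix (Fin m) (Fin m) ℝ))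
    (hcpt : IsCompact 𝓜) (hsym : ∀ M ∈ 𝓜, M.IsSymm)
    (h : ∀ M ∈ 𝓜, ∀ Mp Mm : Matrix (Fin m) (Fin m) ℝ,
      Mp.PosSemidef → Mm.PosSemidef → M = Mp - Mm → (Mpᵀ * Mm).trace = 0 →
      ∃ M' ∈ 𝓜, (M' - Mp).PosSemidef) :
    ConvexOn ℝ Set.univ
      (fun X : Matrix (Fin n) (Fin m) ℝ => ⨆ M ∈ 𝓜, (X * M * Xᵀ).trace) := by
  set f : Matrix (Fin m) (Fin m) ℝ → Matrix (Fin n) (Fin m) ℝ → ℝ :=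
    fun M X => (X * M * Xᵀ).trace with hf
  -- boundedness of the family
  have hbdd : ∀ X : Matrix (Fin n) (Fin m) ℝ,
      BddAbove (Set.range fun M => ⨆ (_ : M ∈ 𝓜), f M X) := by
    intro X
    have hcont : Continuous fun M : Matrix (Fin m) (Fin m) ℝ => f M X := by
      exact (((continuous_const.matrix_mul continuous_id).matrix_mul
        continuous_const)).matrix_trace
    have him : BddAbove ((fun M => f M X) '' 𝓜) := (hcpt.image hcont).bddAbove
    refine (him.insert 0).mono ?_
    rintro x ⟨M, rfl⟩
    dsimp only
    by_cases hM : M ∈ 𝓜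
    · rw [ciSup_pos hM]; exact Set.mem_insert_of_mem _ ⟨M, hM, rfl⟩
    · haveI : IsEmpty (M ∈ 𝓜) := isEmpty_iff.mpr hM
      rw [Real.iSup_of_isEmpty]; exact Set.mem_insert _ _
  have hle : ∀ (X : Matrix (Fin n) (Fin m) ℝ), ∀ M' ∈ 𝓜,
      f M' X ≤ ⨆ M ∈ 𝓜, f M X := by
    intro X M' hM'
    have := le_ciSup (hbdd X) M'
    rwa [ciSup_pos hM'] at this
  have hnonneg : ∀ X : Matrix (Fin n) (Fin m) ℝ, 0 ≤ ⨆ M ∈ 𝓜, f M X := by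
    intro X
    have h0 : (0 : ℝ) ≤ ⨆ (_ : (0 : Matrix (Fin m) (Fin m) ℝ) ∈ 𝓜), f 0 X := by
      by_cases hm0 : (0 : Matrix (Fin m) (Fin m) ℝ) ∈ 𝓜
      · rw [ciSup_pos hm0]; simp [hf]
      · haveI : IsEmpty ((0 : Matrix (Fin m) (Fin m) ℝ) ∈ 𝓜) := isEmpty_iff.mpr hm0
        rw [Real.iSup_of_isEmpty]
    exact h0.trans (le_ciSup (hbdd X) 0)
  refine ⟨convex_univ, ?_⟩
  intro X _ Y _ t s ht hs hts
  simp only [smul_eq_mul]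
  have hsum : (0:ℝ) ≤ t * (⨆ M ∈ 𝓜, f M X) + s * (⨆ M ∈ 𝓜, f M Y) :=
    add_nonneg (mul_nonneg ht (hnonneg X)) (mul_nonneg hs (hnonneg Y))
  apply Real.iSup_le _ hsum
  intro M
  apply Real.iSup_le _ hsum
  intro hM
  -- Moreau decomposition and domination
  obtain ⟨Mp, Mm, hp, hmm, hdec, horth⟩ := moreau (hsym M hM)
  obtain ⟨M', hM', hdom⟩ := h M hM Mp Mm hp hmm hdec horth
  set Z := t • X + s • Y with hZ
  have hMpT : Mpᵀ = Mp := by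
    have := hp.1
    rwa [Matrix.IsHermitian, Matrix.conjTranspose_eq_transpose_of_trivial] at this
  -- step 1 : f M Z ≤ f Mp Z
  have step1 : f M Z ≤ f Mp Z := by
    have hd : f Mp Z - f M Z = f Mm Z := by
      simp only [hf, hdec, Matrix.mul_sub, Matrix.sub_mul, Matrix.trace_sub]
      ring
    have h2 : (0:ℝ) ≤ f Mm Z := quad_trace_nonneg hmm Z
    linarith [hd, h2]
  -- step 2 : convexity of the quadratic form with PSD matrix Mp
  have step2 : f Mp Z ≤ t * f Mp X + s * f Mp Y := by
    have hsymtr : (Y * Mp * Xᵀ).trace = (X * Mp * Yᵀ).trace := by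
      rw [← Matrix.trace_transpose, Matrix.transpose_mul, Matrix.transpose_mul,
        Matrix.transpose_transpose, hMpT, Matrix.mul_assoc]
    have hexp : f Mp Z =
        t^2 * f Mp X + 2*t*s*(X * Mp * Yᵀ).trace + s^2 * f Mp Y := by
      simp only [hf, hZ, Matrix.transpose_add, Matrix.transpose_smul, Matrix.add_mul,
        Matrix.mul_add, Matrix.smul_mul, Matrix.mul_smul, Matrix.trace_add,
        Matrix.trace_smul, smul_eq_mul, hsymtr]
      ring
    have hkey : 0 ≤ f Mp X + f Mp Y - 2*(X * Mp * Yᵀ).trace := by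
      have h3 : (0:ℝ) ≤ f Mp (X - Y) := quad_trace_nonneg hp (X - Y)
      have hd : f Mp (X - Y) =
          f Mp X + f Mp Y - 2*(X * Mp * Yᵀ).trace := by
        simp only [hf, Matrix.transpose_sub, Matrix.sub_mul, Matrix.mul_sub,
          Matrix.trace_sub, hsymtr]
        ring
      linarith [hd, h3]
    rw [hexp]
    have hst : s = 1 - t := by linarith
    subst hst
    nlinarith [mul_nonneg (mul_nonneg ht hs) hkey]
  -- step 3 : f Mp ≤ f M'
  have step3 : ∀ W : Matrix (Fin n) (Fin m) ℝ, f Mp W ≤ f M' W := by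
    intro W
    have h3 : (0:ℝ) ≤ (W * (M' - Mp) * Wᵀ).trace := quad_trace_nonneg hdom W
    have hd : f M' W - f Mp W = (W * (M' - Mp) * Wᵀ).trace := by
      simp only [hf, Matrix.mul_sub, Matrix.sub_mul, Matrix.trace_sub]
    linarith [hd, h3]
  have hx := mul_le_mul_of_nonneg_left (step3 X) ht
  have hy := mul_le_mul_of_nonneg_left (step3 Y) hs
  have hx' := mul_le_mul_of_nonneg_left (hle X M' hM') ht
  have hy' := mul_le_mul_of_nonneg_left (hle Y M' hM') hs
  calc f M Z ≤ f Mp Z := step1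
    _ ≤ t * f Mp X + s * f Mp Y := step2
    _ ≤ t * (⨆ M ∈ 𝓜, f M X) + s * (⨆ M ∈ 𝓜, f M Y) := by linarith
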